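/- Let C be a 2-term EL∞-algebra over a field of characteristic ≠ 2, 3. Define {x,y} = ½([x,y] − [y,x]), {x,a} = ½([x,a] − [a,x]) = −{a,x}, and {x,y,z} = (1/6)Σ_{σ∈S_3} (−1)^σ ⟨x_{σ(1)},x_{σ(2)},x_{σ(3)}⟩ − (1/12)Σ_{σ∈S_3} (−1)^σ ⟨[x_{σ(1)},x_{σ(2)}],x_{σ(3)}⟩. Then (C, d, {·,·}, {·,·,·}) is a 2-term L∞-algebra: {·,·} is a skew-symmetric chain map, {·,·,·} is totally skew-symmetric, d{x,y,z} = {x,{y,z}} − {{x,y},z} − {y,{x,z}}, {da,y,z} measures the Jacobi defect on arrows, and the L∞ coherence Σ(±){x,{y,z,w}}-type identity in four object variables holds. -/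

import Mathlib

/-- A 2-term `EL∞`-algebra: a 2-term cochain complex `d : C⁻¹ → C⁰` with a
chain-map bracket (components `b00`, `b0m`, `bm0`), an alternator `alt`
(a chain homotopy `[·,·] + [·,·]∘σ ⇒ 0`) and a Jacobiator `jac` (a chain
homotopy witnessing the Leibniz/Jacobi identity), subject to the coherence
equations of Roytenberg's definition. -/
structure EL2 (k C0 Cm1 : Type*) [Field k]
    [AddCommGroup C0] [Module k C0] [AddCommGroup Cm1] [Module k Cm1] where
  d : Cm1 →ₗ[k] C0
  b00 : C0 →ₗ[k] C0 →ₗ[k] C0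
  b0m : C0 →ₗ[k] Cm1 →ₗ[k] Cm1
  bm0 : Cm1 →ₗ[k] C0 →ₗ[k] Cm1
  chain1 : ∀ x b, d (b0m x b) = b00 x (d b)
  chain2 : ∀ a y, d (bm0 a y) = b00 (d a) y
  chain3 : ∀ a b, b0m (d a) b = bm0 a (d b)
  alt : C0 →ₗ[k] C0 →ₗ[k] Cm1
  jac : C0 →ₗ[k] C0 →ₗ[k] C0 →ₗ[k] Cm1
  sym1 : ∀ x y, b00 x y + b00 y x = d (alt x y)
  sym2 : ∀ a y, bm0 a y + b0m y a = alt (d a) y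
  sym3 : ∀ x b, b0m x b + bm0 b x = alt x (d b)
  leib1 : ∀ x y z,
    b00 x (b00 y z) - b00 (b00 x y) z - b00 y (b00 x z) = d (jac x y z)
  leib2 : ∀ a y z,
    bm0 a (b00 y z) - bm0 (bm0 a y) z - b0m y (bm0 a z) = jac (d a) y z
  leib3 : ∀ x b z,
    b0m x (bm0 b z) - bm0 (b0m x b) z - bm0 b (b00 x z) = jac x (d b) z
  leib4 : ∀ x y c,
    b0m x (b0m y c) - b0m (b00 x y) c - b0m y (b0m x c) = jac x y (d c)
  coh1 : ∀ x y z w,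
    b0m x (jac y z w) + jac x (b00 y z) w + jac x z (b00 y w)
      + bm0 (jac x y z) w + b0m z (jac x y w)
    = jac x y (b00 z w) + jac (b00 x y) z w + b0m y (jac x z w)
      + jac y (b00 x z) w + jac y z (b00 x w)
  coh2 : ∀ x y z, jac x y z + jac y x z = -bm0 (alt x y) z
  coh3 : ∀ x y z,
    jac x y z + jac x z y = b0m x (alt y z) - alt (b00 x y) z - alt y (b00 x z)
  coh4 : ∀ x y z, alt x (b00 y z) = alt (b00 y z) x

/-- A 2-term `L∞`-algebra: a 2-term complex `d : C⁻¹ → C⁰` with a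
skew-symmetric chain-map bracket (components `b00`, `b0m`, `bm0`) and a
totally skew-symmetric Jacobiator `jac` measuring the Jacobi defect, subject
to the `L∞` coherence law in four variables. -/
structure L2Linf (k C0 Cm1 : Type*) [Field k]
    [AddCommGroup C0] [Module k C0] [AddCommGroup Cm1] [Module k Cm1] where
  d : Cm1 →ₗ[k] C0
  b00 : C0 →ₗ[k] C0 →ₗ[k] C0
  b0m : C0 →ₗ[k] Cm1 →ₗ[k] Cm1
  bm0 : Cm1 →ₗ[k] C0 →ₗ[k] Cm1
  chain1 : ∀ x b, d (b0m x b) = b00 x (d b)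
  chain2 : ∀ a y, d (bm0 a y) = b00 (d a) y
  chain3 : ∀ a b, b0m (d a) b = bm0 a (d b)
  skew : ∀ x y, b00 x y = -b00 y x
  skewm : ∀ x a, b0m x a = -bm0 a x
  jac : C0 →ₗ[k] C0 →ₗ[k] C0 →ₗ[k] Cm1
  jac_skew12 : ∀ x y z, jac x y z = -jac y x z
  jac_skew23 : ∀ x y z, jac x y z = -jac x z y
  leib1 : ∀ x y z,
    b00 x (b00 y z) - b00 (b00 x y) z - b00 y (b00 x z) = d (jac x y z)
  leib2 : ∀ a y z,
    bm0 a (b00 y z) - bm0 (bm0 a y) z - b0m y (bm0 a z) = jac (d a) y z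
  leib3 : ∀ x b z,
    b0m x (bm0 b z) - bm0 (b0m x b) z - bm0 b (b00 x z) = jac x (d b) z
  leib4 : ∀ x y c,
    b0m x (b0m y c) - b0m (b00 x y) c - b0m y (b0m x c) = jac x y (d c)
  coh1 : ∀ x y z w,
    b0m x (jac y z w) + jac x (b00 y z) w + jac x z (b00 y w)
      + bm0 (jac x y z) w + b0m z (jac x y w)
    = jac x y (b00 z w) + jac (b00 x y) z w + b0m y (jac x z w)
      + jac y (b00 x z) w + jac y z (b00 x w)



section Aux

variable {k C0 Cm1 : Type*} [Field k]
    [AddCommGroup C0] [Module k C0] [AddCommGroup Cm1] [Module k Cm1]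

/-- Total skew-symmetrization of a trilinear map (with signs). -/
noncomputable def skew3Aux (J : C0 →ₗ[k] C0 →ₗ[k] C0 →ₗ[k] Cm1) :
    C0 →ₗ[k] C0 →ₗ[k] C0 →ₗ[k] Cm1 :=
  J - J.flip - LinearMap.lflip.toLinearMap ∘ₗ J - (LinearMap.lflip.toLinearMap ∘ₗ J.flip).flip
    + (LinearMap.lflip.toLinearMap ∘ₗ J).flip + LinearMap.lflip.toLinearMap ∘ₗ J.flip

theorem skew3Aux_apply (J : C0 →ₗ[k] C0 →ₗ[k] C0 →ₗ[k] Cm1) (x y z : C0) :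
    skew3Aux J x y z
      = J x y z - J y x z - J x z y - J z y x + J y z x + J z x y := by
  simp [skew3Aux, LinearMap.sub_apply, LinearMap.add_apply, LinearMap.flip_apply,
    LinearMap.comp_apply, LinearMap.lflip_apply]

namespace EL2

variable (E : EL2 k C0 Cm1)

/-- Skew-symmetrized degree-0 bracket. -/
noncomputable def s00 : C0 →ₗ[k] C0 →ₗ[k] C0 := (1/2 : k) • (E.b00 - E.b00.flip)

/-- Skew-symmetrized mixed bracket. -/
noncomputable def s0m : C0 →ₗ[k] Cm1 →ₗ[k] Cm1 := (1/2 : k) • (E.b0m - E.bm0.flip)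

/-- Skew-symmetrized mixed bracket, other order. -/
noncomputable def sm0 : Cm1 →ₗ[k] C0 →ₗ[k] Cm1 := (1/2 : k) • (E.bm0 - E.b0m.flip)

/-- Skew-symmetrized Jacobiator. -/
noncomputable def jac3 : C0 →ₗ[k] C0 →ₗ[k] C0 →ₗ[k] Cm1 :=
  (1/6 : k) • skew3Aux E.jac - (1/12 : k) • skew3Aux (E.b00.compr₂ E.alt)

theorem s00_apply (x y : C0) :
    E.s00 x y = (1/2 : k) • (E.b00 x y - E.b00 y x) := by
  simp [s00, LinearMap.smul_apply, LinearMap.sub_apply, LinearMap.flip_apply]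

theorem s0m_apply (x : C0) (a : Cm1) :
    E.s0m x a = (1/2 : k) • (E.b0m x a - E.bm0 a x) := by
  simp [s0m, LinearMap.smul_apply, LinearMap.sub_apply, LinearMap.flip_apply]

theorem sm0_apply (a : Cm1) (x : C0) :
    E.sm0 a x = (1/2 : k) • (E.bm0 a x - E.b0m x a) := by
  simp [sm0, LinearMap.smul_apply, LinearMap.sub_apply, LinearMap.flip_apply]

theorem jac3_apply (x y z : C0) :
    E.jac3 x y z
      = (1/6 : k) • (E.jac x y z - E.jac y x z - E.jac x z y - E.jac z y x
          + E.jac y z x + E.jac z x y)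
        - (1/12 : k) • (E.alt (E.b00 x y) z - E.alt (E.b00 y x) z
          - E.alt (E.b00 x z) y - E.alt (E.b00 z y) x
          + E.alt (E.b00 y z) x + E.alt (E.b00 z x) y) := by
  simp [jac3, skew3Aux_apply, LinearMap.smul_apply, LinearMap.sub_apply,
    LinearMap.compr₂_apply]

theorem lskew (x y : C0) : E.s00 x y = -E.s00 y x := by
  simp only [EL2.s00_apply]; module

theorem lskewm (x : C0) (a : Cm1) : E.s0m x a = -E.sm0 a x := by
  simp only [EL2.s0m_apply, EL2.sm0_apply]; module

theorem ljskew12 (x y z : C0) : E.jac3 x y z = -E.jac3 y x z := by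
  simp only [EL2.jac3_apply]; module

theorem ljskew23 (x y z : C0) : E.jac3 x y z = -E.jac3 x z y := by
  simp only [EL2.jac3_apply]; module

theorem lchain1 (x : C0) (b : Cm1) :
    E.d (E.s0m x b) = E.s00 x (E.d b) := by
  simp only [EL2.s00_apply, EL2.s0m_apply, EL2.sm0_apply, EL2.jac3_apply, map_sub, map_add, map_smul, LinearMap.sub_apply, LinearMap.add_apply, LinearMap.smul_apply]
  linear_combination (norm := module) (1/2 : k) • (E.chain1 x b)
      + (-1/2 : k) • (E.chain2 b x)

theorem lchain2 (a : Cm1) (y : C0) :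
    E.d (E.sm0 a y) = E.s00 (E.d a) y := by
  simp only [EL2.s00_apply, EL2.s0m_apply, EL2.sm0_apply, EL2.jac3_apply, map_sub, map_add, map_smul, LinearMap.sub_apply, LinearMap.add_apply, LinearMap.smul_apply]
  linear_combination (norm := module) (1/2 : k) • (E.chain2 a y)
      + (-1/2 : k) • (E.chain1 y a)

theorem lchain3 (a b : Cm1) :
    E.s0m (E.d a) b = E.sm0 a (E.d b) := by
  simp only [EL2.s00_apply, EL2.s0m_apply, EL2.sm0_apply, EL2.jac3_apply, map_sub, map_add, map_smul, LinearMap.sub_apply, LinearMap.add_apply, LinearMap.smul_apply]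
  linear_combination (norm := module) (1/2 : k) • (E.chain3 a b)
      + (1/2 : k) • (E.chain3 b a)

theorem lleib1 (h2 : (2:k) ≠ 0) (h3 : (3:k) ≠ 0) (x y z : C0) :
    E.s00 x (E.s00 y z) - E.s00 (E.s00 x y) z - E.s00 y (E.s00 x z)
      = E.d (E.jac3 x y z) := by
  have h4 : (4:k) ≠ 0 := by have h := mul_ne_zero h2 h2; norm_num at h; exact h
  have h6 : (6:k) ≠ 0 := by have h := mul_ne_zero h2 h3; norm_num at h; exact h
  have h8 : (8:k) ≠ 0 := by have h := mul_ne_zero h2 h4; norm_num at h; exact h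
  have h9 : (9:k) ≠ 0 := by have h := mul_ne_zero h3 h3; norm_num at h; exact h
  have h12 : (12:k) ≠ 0 := by have h := mul_ne_zero h2 h6; norm_num at h; exact h
  have h16 : (16:k) ≠ 0 := by have h := mul_ne_zero h2 h8; norm_num at h; exact h
  have h24 : (24:k) ≠ 0 := by have h := mul_ne_zero h2 h12; norm_num at h; exact h
  have h36 : (36:k) ≠ 0 := by have h := mul_ne_zero h3 h12; norm_num at h; exact h
  have h48 : (48:k) ≠ 0 := by have h := mul_ne_zero h2 h24; norm_num at h; exact h
  have h72 : (72:k) ≠ 0 := by have h := mul_ne_zero h2 h36; norm_num at h; exact h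
  have h144 : (144:k) ≠ 0 := by have h := mul_ne_zero h2 h72; norm_num at h; exact h
  simp only [EL2.s00_apply, EL2.s0m_apply, EL2.sm0_apply, EL2.jac3_apply, map_sub, map_add, map_smul, LinearMap.sub_apply, LinearMap.add_apply, LinearMap.smul_apply]
  linear_combination (norm := match_scalars <;> (first | ring1 | (field_simp [h2,h3,h4,h6,h8,h9,h12,h16,h24,h36,h48,h72,h144]; try ring))) (1/6 : k) • (E.leib1 x y z)
      + (-1/12 : k) • (E.sym1 (E.b00 x y) z)
      + (-1/6 : k) • (E.leib1 x z y)
      + (1/12 : k) • (E.sym1 (E.b00 x z) y)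
      + (-1/6 : k) • (E.leib1 y x z)
      + (1/12 : k) • (E.sym1 (E.b00 y x) z)
      + (1/6 : k) • (E.leib1 y z x)
      + (-1/12 : k) • (E.sym1 (E.b00 y z) x)
      + (1/6 : k) • (E.leib1 z x y)
      + (-1/12 : k) • (E.sym1 (E.b00 z x) y)
      + (-1/6 : k) • (E.leib1 z y x)
      + (1/12 : k) • (E.sym1 (E.b00 z y) x)

theorem lleib2 (h2 : (2:k) ≠ 0) (h3 : (3:k) ≠ 0) (a : Cm1) (y z : C0) :
    E.sm0 a (E.s00 y z) - E.sm0 (E.sm0 a y) z - E.s0m y (E.sm0 a z)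
      = E.jac3 (E.d a) y z := by
  have h4 : (4:k) ≠ 0 := by have h := mul_ne_zero h2 h2; norm_num at h; exact h
  have h6 : (6:k) ≠ 0 := by have h := mul_ne_zero h2 h3; norm_num at h; exact h
  have h8 : (8:k) ≠ 0 := by have h := mul_ne_zero h2 h4; norm_num at h; exact h
  have h9 : (9:k) ≠ 0 := by have h := mul_ne_zero h3 h3; norm_num at h; exact h
  have h12 : (12:k) ≠ 0 := by have h := mul_ne_zero h2 h6; norm_num at h; exact h
  have h16 : (16:k) ≠ 0 := by have h := mul_ne_zero h2 h8; norm_num at h; exact h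
  have h24 : (24:k) ≠ 0 := by have h := mul_ne_zero h2 h12; norm_num at h; exact h
  have h36 : (36:k) ≠ 0 := by have h := mul_ne_zero h3 h12; norm_num at h; exact h
  have h48 : (48:k) ≠ 0 := by have h := mul_ne_zero h2 h24; norm_num at h; exact h
  have h72 : (72:k) ≠ 0 := by have h := mul_ne_zero h2 h36; norm_num at h; exact h
  have h144 : (144:k) ≠ 0 := by have h := mul_ne_zero h2 h72; norm_num at h; exact h
  simp only [EL2.s00_apply, EL2.s0m_apply, EL2.sm0_apply, EL2.jac3_apply, map_sub, map_add, map_smul, LinearMap.sub_apply, LinearMap.add_apply, LinearMap.smul_apply]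
  have hw1 : E.alt (E.d (E.bm0 a y)) z = E.alt (E.b00 (E.d a) y) z := congrArg (fun t => E.alt t z) (E.chain2 a y)
  have hw2 : E.alt (E.d (E.b0m y a)) z = E.alt (E.b00 y (E.d a)) z := congrArg (fun t => E.alt t z) (E.chain1 y a)
  have hw3 : E.alt (E.d (E.bm0 a z)) y = E.alt (E.b00 (E.d a) z) y := congrArg (fun t => E.alt t y) (E.chain2 a z)
  have hw4 : E.alt (E.d (E.b0m z a)) y = E.alt (E.b00 z (E.d a)) y := congrArg (fun t => E.alt t y) (E.chain1 z a)
  linear_combination (norm := match_scalars <;> (first | ring1 | (field_simp [h2,h3,h4,h6,h8,h9,h12,h16,h24,h36,h48,h72,h144]; try ring))) (1/6 : k) • (E.leib2 a y z)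
      + (-1/6 : k) • (E.leib3 y a z)
      + (1/6 : k) • (E.leib4 y z a)
      + (-1/12 : k) • (E.sym2 (E.bm0 a y) z)
      + (-1/12 : k) • hw1
      + (1/12 : k) • (E.sym2 (E.b0m y a) z)
      + (1/12 : k) • hw2
      + (-1/12 : k) • (E.sym3 (E.b00 y z) a)
      + (-1/6 : k) • (E.leib2 a z y)
      + (1/6 : k) • (E.leib3 z a y)
      + (-1/6 : k) • (E.leib4 z y a)
      + (1/12 : k) • (E.sym2 (E.bm0 a z) y)
      + (1/12 : k) • hw3
      + (-1/12 : k) • (E.sym2 (E.b0m z a) y)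
      + (-1/12 : k) • hw4
      + (1/12 : k) • (E.sym3 (E.b00 z y) a)

theorem lleib3 (h2 : (2:k) ≠ 0) (h3 : (3:k) ≠ 0) (x : C0) (b : Cm1) (z : C0) :
    E.s0m x (E.sm0 b z) - E.sm0 (E.s0m x b) z - E.sm0 b (E.s00 x z)
      = E.jac3 x (E.d b) z := by
  have h4 : (4:k) ≠ 0 := by have h := mul_ne_zero h2 h2; norm_num at h; exact h
  have h6 : (6:k) ≠ 0 := by have h := mul_ne_zero h2 h3; norm_num at h; exact h
  have h8 : (8:k) ≠ 0 := by have h := mul_ne_zero h2 h4; norm_num at h; exact h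
  have h9 : (9:k) ≠ 0 := by have h := mul_ne_zero h3 h3; norm_num at h; exact h
  have h12 : (12:k) ≠ 0 := by have h := mul_ne_zero h2 h6; norm_num at h; exact h
  have h16 : (16:k) ≠ 0 := by have h := mul_ne_zero h2 h8; norm_num at h; exact h
  have h24 : (24:k) ≠ 0 := by have h := mul_ne_zero h2 h12; norm_num at h; exact h
  have h36 : (36:k) ≠ 0 := by have h := mul_ne_zero h3 h12; norm_num at h; exact h
  have h48 : (48:k) ≠ 0 := by have h := mul_ne_zero h2 h24; norm_num at h; exact h
  have h72 : (72:k) ≠ 0 := by have h := mul_ne_zero h2 h36; norm_num at h; exact h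
  have h144 : (144:k) ≠ 0 := by have h := mul_ne_zero h2 h72; norm_num at h; exact h
  simp only [EL2.s00_apply, EL2.s0m_apply, EL2.sm0_apply, EL2.jac3_apply, map_sub, map_add, map_smul, LinearMap.sub_apply, LinearMap.add_apply, LinearMap.smul_apply]
  have hw1 : E.alt (E.d (E.bm0 b x)) z = E.alt (E.b00 (E.d b) x) z := congrArg (fun t => E.alt t z) (E.chain2 b x)
  have hw2 : E.alt (E.d (E.b0m x b)) z = E.alt (E.b00 x (E.d b)) z := congrArg (fun t => E.alt t z) (E.chain1 x b)
  have hw3 : E.alt (E.d (E.bm0 b z)) x = E.alt (E.b00 (E.d b) z) x := congrArg (fun t => E.alt t x) (E.chain2 b z)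
  have hw4 : E.alt (E.d (E.b0m z b)) x = E.alt (E.b00 z (E.d b)) x := congrArg (fun t => E.alt t x) (E.chain1 z b)
  linear_combination (norm := match_scalars <;> (first | ring1 | (field_simp [h2,h3,h4,h6,h8,h9,h12,h16,h24,h36,h48,h72,h144]; try ring))) (-1/6 : k) • (E.leib2 b x z)
      + (1/6 : k) • (E.leib3 x b z)
      + (-1/6 : k) • (E.leib4 x z b)
      + (1/12 : k) • (E.sym2 (E.bm0 b x) z)
      + (1/12 : k) • hw1
      + (-1/12 : k) • (E.sym2 (E.b0m x b) z)
      + (-1/12 : k) • hw2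
      + (1/12 : k) • (E.sym3 (E.b00 x z) b)
      + (1/6 : k) • (E.leib2 b z x)
      + (-1/6 : k) • (E.leib3 z b x)
      + (1/6 : k) • (E.leib4 z x b)
      + (-1/12 : k) • (E.sym2 (E.bm0 b z) x)
      + (-1/12 : k) • hw3
      + (1/12 : k) • (E.sym2 (E.b0m z b) x)
      + (1/12 : k) • hw4
      + (-1/12 : k) • (E.sym3 (E.b00 z x) b)

theorem lleib4 (h2 : (2:k) ≠ 0) (h3 : (3:k) ≠ 0) (x y : C0) (c : Cm1) :
    E.s0m x (E.s0m y c) - E.s0m (E.s00 x y) c - E.s0m y (E.s0m x c)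
      = E.jac3 x y (E.d c) := by
  have h4 : (4:k) ≠ 0 := by have h := mul_ne_zero h2 h2; norm_num at h; exact h
  have h6 : (6:k) ≠ 0 := by have h := mul_ne_zero h2 h3; norm_num at h; exact h
  have h8 : (8:k) ≠ 0 := by have h := mul_ne_zero h2 h4; norm_num at h; exact h
  have h9 : (9:k) ≠ 0 := by have h := mul_ne_zero h3 h3; norm_num at h; exact h
  have h12 : (12:k) ≠ 0 := by have h := mul_ne_zero h2 h6; norm_num at h; exact h
  have h16 : (16:k) ≠ 0 := by have h := mul_ne_zero h2 h8; norm_num at h; exact h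
  have h24 : (24:k) ≠ 0 := by have h := mul_ne_zero h2 h12; norm_num at h; exact h
  have h36 : (36:k) ≠ 0 := by have h := mul_ne_zero h3 h12; norm_num at h; exact h
  have h48 : (48:k) ≠ 0 := by have h := mul_ne_zero h2 h24; norm_num at h; exact h
  have h72 : (72:k) ≠ 0 := by have h := mul_ne_zero h2 h36; norm_num at h; exact h
  have h144 : (144:k) ≠ 0 := by have h := mul_ne_zero h2 h72; norm_num at h; exact h
  simp only [EL2.s00_apply, EL2.s0m_apply, EL2.sm0_apply, EL2.jac3_apply, map_sub, map_add, map_smul, LinearMap.sub_apply, LinearMap.add_apply, LinearMap.smul_apply]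
  have hw1 : E.alt (E.d (E.bm0 c x)) y = E.alt (E.b00 (E.d c) x) y := congrArg (fun t => E.alt t y) (E.chain2 c x)
  have hw2 : E.alt (E.d (E.b0m x c)) y = E.alt (E.b00 x (E.d c)) y := congrArg (fun t => E.alt t y) (E.chain1 x c)
  have hw3 : E.alt (E.d (E.bm0 c y)) x = E.alt (E.b00 (E.d c) y) x := congrArg (fun t => E.alt t x) (E.chain2 c y)
  have hw4 : E.alt (E.d (E.b0m y c)) x = E.alt (E.b00 y (E.d c)) x := congrArg (fun t => E.alt t x) (E.chain1 y c)
  linear_combination (norm := match_scalars <;> (first | ring1 | (field_simp [h2,h3,h4,h6,h8,h9,h12,h16,h24,h36,h48,h72,h144]; try ring))) (1/6 : k) • (E.leib2 c x y)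
      + (-1/6 : k) • (E.leib3 x c y)
      + (1/6 : k) • (E.leib4 x y c)
      + (-1/12 : k) • (E.sym2 (E.bm0 c x) y)
      + (-1/12 : k) • hw1
      + (1/12 : k) • (E.sym2 (E.b0m x c) y)
      + (1/12 : k) • hw2
      + (-1/12 : k) • (E.sym3 (E.b00 x y) c)
      + (-1/6 : k) • (E.leib2 c y x)
      + (1/6 : k) • (E.leib3 y c x)
      + (-1/6 : k) • (E.leib4 y x c)
      + (1/12 : k) • (E.sym2 (E.bm0 c y) x)
      + (1/12 : k) • hw3
      + (-1/12 : k) • (E.sym2 (E.b0m y c) x)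
      + (-1/12 : k) • hw4
      + (1/12 : k) • (E.sym3 (E.b00 y x) c)

set_option maxHeartbeats 0 in
theorem lcoh1 (h2 : (2:k) ≠ 0) (h3 : (3:k) ≠ 0) (x y z w : C0) :
    E.s0m x (E.jac3 y z w) + E.jac3 x (E.s00 y z) w + E.jac3 x z (E.s00 y w)
      + E.sm0 (E.jac3 x y z) w + E.s0m z (E.jac3 x y w)
    = E.jac3 x y (E.s00 z w) + E.jac3 (E.s00 x y) z w + E.s0m y (E.jac3 x z w)
      + E.jac3 y (E.s00 x z) w + E.jac3 y z (E.s00 x w) := by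
  have h4 : (4:k) ≠ 0 := by have h := mul_ne_zero h2 h2; norm_num at h; exact h
  have h6 : (6:k) ≠ 0 := by have h := mul_ne_zero h2 h3; norm_num at h; exact h
  have h8 : (8:k) ≠ 0 := by have h := mul_ne_zero h2 h4; norm_num at h; exact h
  have h9 : (9:k) ≠ 0 := by have h := mul_ne_zero h3 h3; norm_num at h; exact h
  have h12 : (12:k) ≠ 0 := by have h := mul_ne_zero h2 h6; norm_num at h; exact h
  have h16 : (16:k) ≠ 0 := by have h := mul_ne_zero h2 h8; norm_num at h; exact h
  have h24 : (24:k) ≠ 0 := by have h := mul_ne_zero h2 h12; norm_num at h; exact h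
  have h36 : (36:k) ≠ 0 := by have h := mul_ne_zero h3 h12; norm_num at h; exact h
  have h48 : (48:k) ≠ 0 := by have h := mul_ne_zero h2 h24; norm_num at h; exact h
  have h72 : (72:k) ≠ 0 := by have h := mul_ne_zero h2 h36; norm_num at h; exact h
  have h144 : (144:k) ≠ 0 := by have h := mul_ne_zero h2 h72; norm_num at h; exact h
  simp only [EL2.s00_apply, EL2.s0m_apply, EL2.sm0_apply, EL2.jac3_apply, map_sub, map_add, map_smul, LinearMap.sub_apply, LinearMap.add_apply, LinearMap.smul_apply]
  have hw1 := congrArg (fun t => E.alt t w) (E.leib1 x y z)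
  simp only [map_sub, map_add, map_smul, LinearMap.sub_apply, LinearMap.add_apply, LinearMap.smul_apply] at hw1
  have hw2 := congrArg (fun t => E.alt x t) (E.leib1 y w z)
  simp only [map_sub, map_add, map_smul, LinearMap.sub_apply, LinearMap.add_apply, LinearMap.smul_apply] at hw2
  have hw3 := congrArg (fun t => E.alt t z) (E.sym1 (E.b00 x y) w)
  simp only [map_sub, map_add, map_smul, LinearMap.sub_apply, LinearMap.add_apply, LinearMap.smul_apply] at hw3
  have hw4 := congrArg (fun t => E.alt x t) (E.leib1 z y w)
  simp only [map_sub, map_add, map_smul, LinearMap.sub_apply, LinearMap.add_apply, LinearMap.smul_apply] at hw4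
  have hw5 := congrArg (fun t => E.alt t w) (E.leib1 x z y)
  simp only [map_sub, map_add, map_smul, LinearMap.sub_apply, LinearMap.add_apply, LinearMap.smul_apply] at hw5
  have hw6 := congrArg (fun t => E.alt x t) (E.leib1 z w y)
  simp only [map_sub, map_add, map_smul, LinearMap.sub_apply, LinearMap.add_apply, LinearMap.smul_apply] at hw6
  have hw7 := congrArg (fun t => E.alt t y) (E.leib1 x z w)
  simp only [map_sub, map_add, map_smul, LinearMap.sub_apply, LinearMap.add_apply, LinearMap.smul_apply] at hw7
  have hw8 := congrArg (fun t => E.alt x t) (E.leib1 w y z)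
  simp only [map_sub, map_add, map_smul, LinearMap.sub_apply, LinearMap.add_apply, LinearMap.smul_apply] at hw8
  have hw9 := congrArg (fun t => E.alt t z) (E.leib1 x w y)
  simp only [map_sub, map_add, map_smul, LinearMap.sub_apply, LinearMap.add_apply, LinearMap.smul_apply] at hw9
  have hw10 := congrArg (fun t => E.alt t z) (E.sym1 (E.b00 x w) y)
  simp only [map_sub, map_add, map_smul, LinearMap.sub_apply, LinearMap.add_apply, LinearMap.smul_apply] at hw10
  have hw11 := congrArg (fun t => E.alt x t) (E.leib1 w z y)
  simp only [map_sub, map_add, map_smul, LinearMap.sub_apply, LinearMap.add_apply, LinearMap.smul_apply] at hw11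
  have hw12 := congrArg (fun t => E.alt t y) (E.leib1 x w z)
  simp only [map_sub, map_add, map_smul, LinearMap.sub_apply, LinearMap.add_apply, LinearMap.smul_apply] at hw12
  have hw13 := congrArg (fun t => E.alt t y) (E.sym1 (E.b00 x w) z)
  simp only [map_sub, map_add, map_smul, LinearMap.sub_apply, LinearMap.add_apply, LinearMap.smul_apply] at hw13
  have hw14 := congrArg (fun t => E.alt y t) (E.leib1 x z w)
  simp only [map_sub, map_add, map_smul, LinearMap.sub_apply, LinearMap.add_apply, LinearMap.smul_apply] at hw14
  have hw15 := congrArg (fun t => E.alt t w) (E.leib1 y x z)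
  simp only [map_sub, map_add, map_smul, LinearMap.sub_apply, LinearMap.add_apply, LinearMap.smul_apply] at hw15
  have hw16 := congrArg (fun t => E.alt t z) (E.leib1 y x w)
  simp only [map_sub, map_add, map_smul, LinearMap.sub_apply, LinearMap.add_apply, LinearMap.smul_apply] at hw16
  have hw17 := congrArg (fun t => E.alt t z) (E.sym1 (E.b00 y x) w)
  simp only [map_sub, map_add, map_smul, LinearMap.sub_apply, LinearMap.add_apply, LinearMap.smul_apply] at hw17
  have hw18 := congrArg (fun t => E.alt y t) (E.leib1 z x w)
  simp only [map_sub, map_add, map_smul, LinearMap.sub_apply, LinearMap.add_apply, LinearMap.smul_apply] at hw18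
  have hw19 := congrArg (fun t => E.alt t w) (E.leib1 y z x)
  simp only [map_sub, map_add, map_smul, LinearMap.sub_apply, LinearMap.add_apply, LinearMap.smul_apply] at hw19
  have hw20 := congrArg (fun t => E.alt t w) (E.sym1 (E.b00 y z) x)
  simp only [map_sub, map_add, map_smul, LinearMap.sub_apply, LinearMap.add_apply, LinearMap.smul_apply] at hw20
  have hw21 := congrArg (fun t => E.alt y t) (E.leib1 z w x)
  simp only [map_sub, map_add, map_smul, LinearMap.sub_apply, LinearMap.add_apply, LinearMap.smul_apply] at hw21
  have hw22 := congrArg (fun t => E.alt t x) (E.sym1 (E.b00 y z) w)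
  simp only [map_sub, map_add, map_smul, LinearMap.sub_apply, LinearMap.add_apply, LinearMap.smul_apply] at hw22
  have hw23 := congrArg (fun t => E.alt t z) (E.leib1 y w x)
  simp only [map_sub, map_add, map_smul, LinearMap.sub_apply, LinearMap.add_apply, LinearMap.smul_apply] at hw23
  have hw24 := congrArg (fun t => E.alt t z) (E.sym1 (E.b00 y w) x)
  simp only [map_sub, map_add, map_smul, LinearMap.sub_apply, LinearMap.add_apply, LinearMap.smul_apply] at hw24
  have hw25 := congrArg (fun t => E.alt y t) (E.leib1 w z x)
  simp only [map_sub, map_add, map_smul, LinearMap.sub_apply, LinearMap.add_apply, LinearMap.smul_apply] at hw25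
  have hw26 := congrArg (fun t => E.alt t w) (E.leib1 z x y)
  simp only [map_sub, map_add, map_smul, LinearMap.sub_apply, LinearMap.add_apply, LinearMap.smul_apply] at hw26
  have hw27 := congrArg (fun t => E.alt t w) (E.sym1 (E.b00 z x) y)
  simp only [map_sub, map_add, map_smul, LinearMap.sub_apply, LinearMap.add_apply, LinearMap.smul_apply] at hw27
  have hw28 := congrArg (fun t => E.alt t y) (E.sym1 (E.b00 z x) w)
  simp only [map_sub, map_add, map_smul, LinearMap.sub_apply, LinearMap.add_apply, LinearMap.smul_apply] at hw28
  have hw29 := congrArg (fun t => E.alt t w) (E.leib1 z y x)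
  simp only [map_sub, map_add, map_smul, LinearMap.sub_apply, LinearMap.add_apply, LinearMap.smul_apply] at hw29
  have hw30 := congrArg (fun t => E.alt t w) (E.sym1 (E.b00 z y) x)
  simp only [map_sub, map_add, map_smul, LinearMap.sub_apply, LinearMap.add_apply, LinearMap.smul_apply] at hw30
  have hw31 := congrArg (fun t => E.alt t x) (E.sym1 (E.b00 z y) w)
  simp only [map_sub, map_add, map_smul, LinearMap.sub_apply, LinearMap.add_apply, LinearMap.smul_apply] at hw31
  have hw32 := congrArg (fun t => E.alt t y) (E.sym1 (E.b00 z w) x)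
  simp only [map_sub, map_add, map_smul, LinearMap.sub_apply, LinearMap.add_apply, LinearMap.smul_apply] at hw32
  have hw33 := congrArg (fun t => E.alt t x) (E.sym1 (E.b00 z w) y)
  simp only [map_sub, map_add, map_smul, LinearMap.sub_apply, LinearMap.add_apply, LinearMap.smul_apply] at hw33
  have hw34 := congrArg (fun t => E.alt t z) (E.sym1 (E.b00 w x) y)
  simp only [map_sub, map_add, map_smul, LinearMap.sub_apply, LinearMap.add_apply, LinearMap.smul_apply] at hw34
  have hw35 := congrArg (fun t => E.alt t y) (E.sym1 (E.b00 w x) z)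
  simp only [map_sub, map_add, map_smul, LinearMap.sub_apply, LinearMap.add_apply, LinearMap.smul_apply] at hw35
  have hw36 := congrArg (fun t => E.alt t z) (E.sym1 (E.b00 w y) x)
  simp only [map_sub, map_add, map_smul, LinearMap.sub_apply, LinearMap.add_apply, LinearMap.smul_apply] at hw36
  linear_combination (norm := match_scalars <;> (first | ring1 | (field_simp [h2,h3,h4,h6,h8,h9,h12,h16,h24,h36,h48,h72,h144]; try ring))) (1/24 : k) • (E.coh1 x y z w)
      + (-1/24 : k) • (E.coh2 (E.b00 x y) z w)
      + (1/12 : k) • (E.coh3 x (E.b00 y z) w)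
      + (-1/24 : k) • (E.coh4 (E.b00 x y) z w)
      + (1/24 : k) • (E.coh4 x y (E.b00 z w))
      + (1/24 : k) • (E.sym2 (E.jac x y z) w)
      + (-1/24 : k) • hw1
      + (-1/12 : k) • (E.coh1 x y w z)
      + (-1/24 : k) • (E.coh3 x (E.b00 y w) z)
      + (-1/24 : k) • (E.coh4 x (E.b00 y w) z)
      + (1/12 : k) • (E.coh4 x y (E.b00 w z))
      + (1/24 : k) • (E.sym3 x (E.jac y w z))
      + (-1/24 : k) • hw2
      + (1/24 : k) • (E.sym2 (E.alt (E.b00 x y) w) z)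
      + (-1/24 : k) • hw3
      + (-1/24 : k) • (E.coh1 x z y w)
      + (1/24 : k) • (E.coh2 (E.b00 x z) y w)
      + (-1/8 : k) • (E.coh3 x (E.b00 z y) w)
      + (1/24 : k) • (E.coh4 x (E.b00 z y) w)
      + (-1/24 : k) • (E.coh4 x z (E.b00 y w))
      + (-1/24 : k) • (E.sym3 x (E.jac z y w))
      + (1/24 : k) • hw4
      + (-1/24 : k) • (E.sym2 (E.jac x z y) w)
      + (1/24 : k) • hw5
      + (1/24 : k) • (E.coh1 x z w y)
      + (-1/24 : k) • (E.coh2 (E.b00 x z) w y)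
      + (1/12 : k) • (E.coh4 x (E.b00 z w) y)
      + (-1/8 : k) • (E.coh4 x z (E.b00 w y))
      + (-1/12 : k) • (E.sym3 x (E.jac z w y))
      + (1/12 : k) • hw6
      + (-1/24 : k) • (E.sym2 (E.jac x z w) y)
      + (1/24 : k) • hw7
      + (-1/24 : k) • (E.coh1 x w y z)
      + (-1/8 : k) • (E.coh2 (E.b00 x w) y z)
      + (1/24 : k) • (E.coh3 x (E.b00 w y) z)
      + (1/24 : k) • (E.coh4 (E.b00 x w) y z)
      + (1/24 : k) • (E.coh4 x (E.b00 w y) z)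
      + (-1/12 : k) • (E.coh4 x w (E.b00 y z))
      + (-1/24 : k) • (E.sym3 x (E.jac w y z))
      + (1/24 : k) • hw8
      + (1/8 : k) • (E.sym2 (E.jac x w y) z)
      + (-1/8 : k) • hw9
      + (1/12 : k) • (E.sym2 (E.alt (E.b00 x w) y) z)
      + (-1/12 : k) • hw10
      + (1/12 : k) • (E.coh2 (E.b00 x w) z y)
      + (-1/24 : k) • (E.coh3 x (E.b00 w z) y)
      + (-1/12 : k) • (E.coh4 (E.b00 x w) z y)
      + (-1/24 : k) • (E.coh4 x (E.b00 w z) y)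
      + (1/8 : k) • (E.coh4 x w (E.b00 z y))
      + (1/24 : k) • (E.sym3 x (E.jac w z y))
      + (-1/24 : k) • hw11
      + (-1/12 : k) • (E.sym2 (E.jac x w z) y)
      + (1/12 : k) • hw12
      + (-1/24 : k) • (E.sym2 (E.alt (E.b00 x w) z) y)
      + (1/24 : k) • hw13
      + (-1/24 : k) • (E.coh1 y x z w)
      + (1/24 : k) • (E.coh2 (E.b00 y x) z w)
      + (-1/24 : k) • (E.coh3 y (E.b00 x z) w)
      + (1/12 : k) • (E.coh4 (E.b00 y x) z w)
      + (-1/12 : k) • (E.coh4 y (E.b00 x z) w)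
      + (1/12 : k) • (E.sym3 y (E.jac x z w))
      + (-1/12 : k) • hw14
      + (-1/24 : k) • (E.sym2 (E.jac y x z) w)
      + (1/24 : k) • hw15
      + (1/8 : k) • (E.coh1 y x w z)
      + (1/24 : k) • (E.coh2 (E.b00 y x) w z)
      + (-1/24 : k) • (E.sym2 (E.jac y x w) z)
      + (1/24 : k) • hw16
      + (-1/12 : k) • (E.sym2 (E.alt (E.b00 y x) w) z)
      + (1/12 : k) • hw17
      + (-1/12 : k) • (E.coh2 (E.b00 y z) x w)
      + (1/6 : k) • (E.coh3 y (E.b00 z x) w)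
      + (-1/12 : k) • (E.coh4 y (E.b00 z x) w)
      + (1/12 : k) • (E.sym3 y (E.jac z x w))
      + (-1/12 : k) • hw18
      + (1/12 : k) • (E.sym2 (E.jac y z x) w)
      + (-1/12 : k) • hw19
      + (1/24 : k) • (E.sym2 (E.alt (E.b00 y z) x) w)
      + (-1/24 : k) • hw20
      + (-1/12 : k) • (E.coh1 y z w x)
      + (1/24 : k) • (E.coh3 y (E.b00 z w) x)
      + (-1/24 : k) • (E.coh4 (E.b00 y z) w x)
      + (-1/8 : k) • (E.coh4 y (E.b00 z w) x)
      + (1/6 : k) • (E.coh4 y z (E.b00 w x))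
      + (1/8 : k) • (E.sym3 y (E.jac z w x))
      + (-1/8 : k) • hw21
      + (1/24 : k) • (E.sym2 (E.alt (E.b00 y z) w) x)
      + (-1/24 : k) • hw22
      + (1/12 : k) • (E.coh1 y w x z)
      + (1/6 : k) • (E.coh2 (E.b00 y w) x z)
      + (-1/12 : k) • (E.coh3 y (E.b00 w x) z)
      + (-1/6 : k) • (E.sym2 (E.jac y w x) z)
      + (1/6 : k) • hw23
      + (-1/8 : k) • (E.sym2 (E.alt (E.b00 y w) x) z)
      + (1/8 : k) • hw24
      + (1/24 : k) • (E.coh1 y w z x)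
      + (-1/24 : k) • (E.coh2 (E.b00 y w) z x)
      + (1/24 : k) • (E.coh3 y (E.b00 w z) x)
      + (1/8 : k) • (E.coh4 (E.b00 y w) z x)
      + (1/24 : k) • (E.coh4 y (E.b00 w z) x)
      + (-1/6 : k) • (E.coh4 y w (E.b00 z x))
      + (-1/24 : k) • (E.sym3 y (E.jac w z x))
      + (1/24 : k) • hw25
      + (-1/12 : k) • (E.coh2 (E.b00 z x) y w)
      + (1/12 : k) • (E.coh3 z (E.b00 x y) w)
      + (1/12 : k) • (E.sym2 (E.jac z x y) w)
      + (-1/12 : k) • hw26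
      + (1/24 : k) • (E.sym2 (E.alt (E.b00 z x) y) w)
      + (-1/24 : k) • hw27
      + (-1/6 : k) • (E.coh1 z x w y)
      + (-1/12 : k) • (E.coh2 (E.b00 z x) w y)
      + (1/24 : k) • (E.coh3 z (E.b00 x w) y)
      + (-1/24 : k) • (E.coh4 (E.b00 z x) w y)
      + (1/8 : k) • (E.sym2 (E.alt (E.b00 z x) w) y)
      + (-1/8 : k) • hw28
      + (1/12 : k) • (E.coh2 (E.b00 z y) x w)
      + (-1/8 : k) • (E.coh3 z (E.b00 y x) w)
      + (-1/12 : k) • (E.sym2 (E.jac z y x) w)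
      + (1/12 : k) • hw29
      + (-1/24 : k) • (E.sym2 (E.alt (E.b00 z y) x) w)
      + (1/24 : k) • hw30
      + (1/8 : k) • (E.coh1 z y w x)
      + (1/24 : k) • (E.coh2 (E.b00 z y) w x)
      + (-1/12 : k) • (E.coh3 z (E.b00 y w) x)
      + (1/24 : k) • (E.coh4 (E.b00 z y) w x)
      + (-1/12 : k) • (E.sym2 (E.alt (E.b00 z y) w) x)
      + (1/12 : k) • hw31
      + (-1/24 : k) • (E.coh1 z w x y)
      + (-1/8 : k) • (E.coh2 (E.b00 z w) x y)
      + (1/12 : k) • (E.coh3 z (E.b00 w x) y)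
      + (1/12 : k) • (E.sym2 (E.alt (E.b00 z w) x) y)
      + (-1/12 : k) • hw32
      + (1/12 : k) • (E.coh2 (E.b00 z w) y x)
      + (-1/12 : k) • (E.coh3 z (E.b00 w y) x)
      + (-1/24 : k) • (E.sym2 (E.alt (E.b00 z w) y) x)
      + (1/24 : k) • hw33
      + (-1/12 : k) • (E.coh1 w x y z)
      + (-1/24 : k) • (E.coh3 w (E.b00 x y) z)
      + (1/24 : k) • (E.sym2 (E.alt (E.b00 w x) y) z)
      + (-1/24 : k) • hw34
      + (1/12 : k) • (E.coh1 w x z y)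
      + (1/24 : k) • (E.coh3 w (E.b00 x z) y)
      + (-1/24 : k) • (E.sym2 (E.alt (E.b00 w x) z) y)
      + (1/24 : k) • hw35
      + (1/12 : k) • (E.coh1 w y x z)
      + (1/24 : k) • (E.coh3 w (E.b00 y x) z)
      + (-1/24 : k) • (E.sym2 (E.alt (E.b00 w y) x) z)
      + (1/24 : k) • hw36
      + (-1/24 : k) • (E.coh1 w y z x)
      + (1/24 : k) • (E.coh2 (E.b00 w y) z x)
      + (-1/24 : k) • (E.coh1 w z x y)
      + (1/24 : k) • (E.coh2 (E.b00 w z) x y)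
      + (1/24 : k) • (E.coh1 w z y x)
      + (-1/24 : k) • (E.coh2 (E.b00 w z) y x)

end EL2

end Aux

/-- **skew-symmetrization.** Over a field of characteristic
≠ 2, 3, every 2-term `EL∞`-algebra yields a 2-term `L∞`-algebra on the same
complex, with bracket `{x,y} = ½([x,y] − [y,x])`, `{x,a} = ½([x,a] − [a,x])`
and Jacobiator
`{x,y,z} = (1/6)Σ_σ(−1)^σ⟨x_{σ1},x_{σ2},x_{σ3}⟩ −
(1/12)Σ_σ(−1)^σ⟨[x_{σ1},x_{σ2}],x_{σ3}⟩`. -/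
theorem el2_skew_symmetrization (k C0 Cm1 : Type*) [Field k]
    (h2 : (2 : k) ≠ 0) (h3 : (3 : k) ≠ 0)
    [AddCommGroup C0] [Module k C0] [AddCommGroup Cm1] [Module k Cm1]
    (E : EL2 k C0 Cm1) :
    ∃ L : L2Linf k C0 Cm1,
      L.d = E.d ∧
      (∀ x y : C0, L.b00 x y = (1/2 : k) • (E.b00 x y - E.b00 y x)) ∧
      (∀ (x : C0) (a : Cm1), L.b0m x a = (1/2 : k) • (E.b0m x a - E.bm0 a x)) ∧
      (∀ (a : Cm1) (x : C0), L.bm0 a x = (1/2 : k) • (E.bm0 a x - E.b0m x a)) ∧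
      (∀ x y z : C0, L.jac x y z
        = (1/6 : k) • (E.jac x y z - E.jac y x z - E.jac x z y - E.jac z y x
            + E.jac y z x + E.jac z x y)
          - (1/12 : k) • (E.alt (E.b00 x y) z - E.alt (E.b00 y x) z
            - E.alt (E.b00 x z) y - E.alt (E.b00 z y) x
            + E.alt (E.b00 y z) x + E.alt (E.b00 z x) y)) := by
  refine ⟨{ d := E.d
            b00 := E.s00
            b0m := E.s0m
            bm0 := E.sm0
            chain1 := E.lchain1
            chain2 := E.lchain2
            chain3 := E.lchain3
            skew := E.lskew
            skewm := E.lskewm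
            jac := E.jac3
            jac_skew12 := E.ljskew12
            jac_skew23 := E.ljskew23
            leib1 := E.lleib1 h2 h3
            leib2 := E.lleib2 h2 h3
            leib3 := E.lleib3 h2 h3
            leib4 := E.lleib4 h2 h3
            coh1 := E.lcoh1 h2 h3 },
    rfl, E.s00_apply, E.s0m_apply, E.sm0_apply, E.jac3_apply⟩
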